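/- The equivalence relation ≡ on a Wheeler DFA — which identifies states in maximal runs of Wheeler-consecutive states that share the same incoming label and are pairwise Myhill-Nerode equivalent — is right-invariant: if u ≡ v, then for every character a, δ(u,a) is defined iff δ(v,a) is defined, and when defined, δ(u,a) ≡ δ(v,a). -/
import Mathlib


/-- A Wheeler DFA over a linearly ordered state set `Q` (the Wheeler order)
and a linearly ordered alphabet `A`.  The transition function is partial
(`Option`-valued).  The three Wheeler axioms are part of the structure. -/
structure WDFA (Q A : Type) [LinearOrder Q] [LinearOrder A] where
  delta : Q → A → Option Q
  start : Q
  F : Set Q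
  /-- Wheeler axiom (i): the initial state is minimum. -/
  start_le : ∀ u, start ≤ u
  /-- Wheeler axiom (ii). -/
  w2 : ∀ {u v : Q} {a b : A} {u' v' : Q},
      delta u a = some u' → delta v b = some v' → a < b → u' < v'
  /-- Wheeler axiom (iii). -/
  w3 : ∀ {u v : Q} {a : A} {u' v' : Q},
      delta u a = some u' → delta v a = some v' → u < v → u' ≤ v'

namespace WDFA

variable {Q A : Type} [LinearOrder Q] [LinearOrder A]

/-- Extension of the (partial) transition function to strings. -/
def dhat (M : WDFA Q A) : Q → List A → Option Q
  | q, [] => some q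
  | q, a :: w => (M.delta q a).bind (fun p => M.dhat p w)

/-- `q` accepts the string `w`. -/
def Acc (M : WDFA Q A) (q : Q) (w : List A) : Prop :=
  ∃ p, M.dhat q w = some p ∧ p ∈ M.F

/-- Set of labels of outgoing edges of `q`. -/
def out (M : WDFA Q A) (q : Q) : Set A := {a | (M.delta q a).isSome}

/-- Myhill–Nerode state equivalence (with equal domains of definition). -/
def MN (M : WDFA Q A) (u v : Q) : Prop :=
  ∀ w : List A, (M.dhat u w).isSome = (M.dhat v w).isSome ∧ (M.Acc u w ↔ M.Acc v w)

/-- Myhill–Nerode state equivalence, acceptance-only version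
(undefined counts as rejecting). -/
def MNacc (M : WDFA Q A) (u v : Q) : Prop :=
  ∀ w : List A, M.Acc u w ↔ M.Acc v w

/-- `u` and `v` are adjacent in the Wheeler order. -/
def Adj (M : WDFA Q A) (u v : Q) : Prop :=
  u < v ∧ ∀ w : Q, ¬ (u < w ∧ w < v)

/-- `lam` is the incoming-label map: `lam start = ⊥` (the special symbol `#`)
and every transition entering `v` is labelled `lam v`. -/
def HasLam (M : WDFA Q A) (lam : Q → WithBot A) : Prop :=
  lam M.start = ⊥ ∧ ∀ u a v, M.delta u a = some v → lam v = (a : WithBot A)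

/-- Every non-initial state has an incoming transition (reachability). -/
def Reach1 (M : WDFA Q A) : Prop :=
  ∀ u, u ≠ M.start → ∃ p a, M.delta p a = some u

/-- Every state accepts some string (is final or reaches a final state). -/
def Coacc (M : WDFA Q A) : Prop := ∀ u, ∃ w, M.Acc u w

/-- The minimum-WDFA equivalence `≡`: `u` and `v` have the same incoming
label, are Myhill–Nerode equivalent, and so is every state between them in
the Wheeler order. -/
def Equ (M : WDFA Q A) (lam : Q → WithBot A) (u v : Q) : Prop :=
  lam u = lam v ∧ M.MN u v ∧
    ∀ w, min u v ≤ w → w ≤ max u v → lam w = lam u ∧ M.MN w u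

/-- `(u,v)` is a node of the border graph: adjacent states with equal
incoming labels. -/
def IsBorder (M : WDFA Q A) (lam : Q → WithBot A) (u v : Q) : Prop :=
  M.Adj u v ∧ lam u = lam v

/-- Edge relation of the border graph `B(A)`: there is an edge from the
border `x` to the border `y` whenever `x.1 = δ(y.1, λ(x.1))` and
`x.2 = δ(y.2, λ(x.1))`. -/
def EdgeZ (M : WDFA Q A) (lam : Q → WithBot A) : Q × Q → Q × Q → Prop :=
  fun x y => M.IsBorder lam x.1 x.2 ∧ M.IsBorder lam y.1 y.2 ∧
    ∃ a : A, lam x.1 = (a : WithBot A) ∧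
      M.delta y.1 a = some x.1 ∧ M.delta y.2 a = some x.2

/-- Transition function of the quotient automaton `A/st`
(`δ([u],a) = [δ(u,a)]`, implemented via representatives). -/
noncomputable def qdelta (M : WDFA Q A) (st : Setoid Q) (c : Quotient st) (a : A) :
    Option (Quotient st) :=
  (M.delta (Quotient.out c) a).map (Quotient.mk st)

/-- String extension of the quotient transition function. -/
noncomputable def qdhat (M : WDFA Q A) (st : Setoid Q) : Quotient st → List A → Option (Quotient st)
  | c, [] => some c
  | c, a :: w => (M.qdelta st c a).bind (fun d => M.qdhat st d w)

/-- The quotient automaton accepts `w`. -/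
def qAcc (M : WDFA Q A) (st : Setoid Q) (w : List A) : Prop :=
  ∃ c, M.qdhat st (Quotient.mk st M.start) w = some c ∧
    ∃ u ∈ M.F, Quotient.mk st u = c

/-- Order induced on `≡`-classes by the Wheeler order (classes are
intervals, so comparing arbitrary representatives is well defined). -/
def qle (st : Setoid Q) (c d : Quotient st) : Prop :=
  c = d ∨ ∀ u v : Q, Quotient.mk st u = c → Quotient.mk st v = d → u < v

lemma dhat_cons (M : WDFA Q A) {q q' : Q} {a : A} (h : M.delta q a = some q')
    (w : List A) : M.dhat q (a :: w) = M.dhat q' w := by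
  simp [dhat, h]

lemma dhat_single (M : WDFA Q A) (q : Q) (a : A) : M.dhat q [a] = M.delta q a := by
  cases h : M.delta q a <;> simp [dhat, h]

lemma MN_refl (M : WDFA Q A) (u : Q) : M.MN u u := fun _ => ⟨rfl, Iff.rfl⟩

lemma MN_symm {M : WDFA Q A} {u v : Q} (h : M.MN u v) : M.MN v u :=
  fun w => ⟨(h w).1.symm, (h w).2.symm⟩

lemma MN_trans {M : WDFA Q A} {u v z : Q} (h1 : M.MN u v) (h2 : M.MN v z) : M.MN u z :=
  fun w => ⟨(h1 w).1.trans (h2 w).1, (h1 w).2.trans (h2 w).2⟩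

lemma MN_step {M : WDFA Q A} {u v u' v' : Q} {a : A}
    (h : M.MN u v) (hu : M.delta u a = some u') (hv : M.delta v a = some v') :
    M.MN u' v' := by
  intro w
  have := h (a :: w)
  simpa only [Acc, M.dhat_cons hu, M.dhat_cons hv] using this

lemma Equ_symm {M : WDFA Q A} {lam : Q → WithBot A} {u v : Q}
    (h : M.Equ lam u v) : M.Equ lam v u := by
  obtain ⟨hl, hmn, hbet⟩ := h
  refine ⟨hl.symm, MN_symm hmn, fun w h1 h2 => ?_⟩
  rw [min_comm] at h1; rw [max_comm] at h2
  exact ⟨(hbet w h1 h2).1.trans hl, MN_trans (hbet w h1 h2).2 hmn⟩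

lemma equ_key (M : WDFA Q A) (lam : Q → WithBot A) (hlam : M.HasLam lam)
    (hreach : M.Reach1) {u v : Q} (huv : u ≤ v) (h : M.Equ lam u v)
    {a : A} {u' v' : Q} (hu : M.delta u a = some u') (hv : M.delta v a = some v') :
    M.Equ lam u' v' := by
  obtain ⟨hl, hmn, hbet⟩ := h
  have hlu' : lam u' = a := hlam.2 u a u' hu
  have hlv' : lam v' = a := hlam.2 v a v' hv
  have hmn' : M.MN u' v' := MN_step hmn hu hv
  have hle : u' ≤ v' := by
    rcases eq_or_lt_of_le huv with rfl | hlt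
    · rw [hu] at hv; exact le_of_eq (Option.some.inj hv)
    · exact M.w3 hu hv hlt
  refine ⟨hlu'.trans hlv'.symm, hmn', ?_⟩
  intro z hz1 hz2
  rw [min_eq_left hle] at hz1
  rw [max_eq_right hle] at hz2
  rcases eq_or_lt_of_le hz1 with rfl | hz1'
  · exact ⟨rfl, M.MN_refl _⟩
  rcases eq_or_lt_of_le hz2 with rfl | hz2'
  · exact ⟨hlv'.trans hlu'.symm, MN_symm hmn'⟩
  have hzs : z ≠ M.start := by
    intro hzeq
    exact absurd (M.start_le u') (by rw [← hzeq]; exact not_le.mpr hz1')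
  obtain ⟨p, b, hp⟩ := hreach z hzs
  have hba : b = a := by
    rcases lt_trichotomy b a with hba | rfl | hba
    · exact absurd (M.w2 hp hu hba) (not_lt.mpr hz1'.le)
    · rfl
    · exact absurd (M.w2 hv hp hba) (not_lt.mpr hz2'.le)
  subst hba
  have hup : u < p := by
    rcases lt_trichotomy u p with h1 | rfl | h1
    · exact h1
    · rw [hu] at hp; exact absurd (Option.some.inj hp) (ne_of_lt hz1')
    · exact absurd (M.w3 hp hu h1) (not_le.mpr hz1')
  have hpv : p < v := by
    rcases lt_trichotomy p v with h1 | rfl | h1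
    · exact h1
    · rw [hv] at hp; exact absurd (Option.some.inj hp).symm (ne_of_lt hz2')
    · exact absurd (M.w3 hv hp h1) (not_le.mpr hz2')
  have hpb := hbet p (by rw [min_eq_left huv]; exact hup.le)
    (by rw [max_eq_right huv]; exact hpv.le)
  exact ⟨(hlam.2 p b z hp).trans hlu'.symm, MN_step hpb.2 hp hu⟩

end WDFA

/-- the equivalence `≡` is right-invariant. -/
theorem wdfa_equ_right_invariant {Q A : Type} [LinearOrder Q] [LinearOrder A]
    (M : WDFA Q A) (lam : Q → WithBot A) (hlam : M.HasLam lam)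
    (hreach : M.Reach1) (u v : Q) (h : M.Equ lam u v) :
    ∀ a : A, (M.delta u a).isSome = (M.delta v a).isSome ∧
      ∀ u' v' : Q, M.delta u a = some u' → M.delta v a = some v' →
        M.Equ lam u' v' := by
  intro a
  constructor
  · have := (h.2.1 [a]).1
    rwa [WDFA.dhat_single, WDFA.dhat_single] at this
  · intro u' v' hu hv
    rcases le_total u v with huv | hvu
    · exact WDFA.equ_key M lam hlam hreach huv h hu hv
    · exact WDFA.Equ_symm (WDFA.equ_key M lam hlam hreach hvu (WDFA.Equ_symm h) hv hu)
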